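/- Let $m > 1$ be an integer. Then $\sum_{h/k:\, 0/1 < h/k < 1/2} \sum_{s=1}^{\lfloor m/k \rfloor} \binom{m}{s k}\left(\binom{m}{s h} + \binom{m}{s(k-h)}\right) = \sum_{h/k:\, 1/2 < h/k < 1/1} \sum_{s=1}^{\lfloor m/k \rfloor} \binom{m}{s k}\left(\binom{m}{s h} + \binom{m}{s(k-h)}\right) = 2^{2m-1} - 2^m - \tfrac{1}{2}\binom{2m}{m} - \sum_{t=1}^{\lfloor m/2 \rfloor} \binom{m}{2t}\binom{m}{t} + 1$, where the outer sums range over all reduced fractions $h/k \in \mathcal{F}_m$ in the indicated open intervals. -/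
import Mathlib

open Finset

namespace FareyAux

/-- inner sum -/
def f (m : ℕ) (p : ℕ × ℕ) : ℕ :=
  ∑ s ∈ Finset.Icc 1 (m / p.2),
    (m.choose (s * p.2)) * ((m.choose (s * p.1)) + (m.choose (s * (p.2 - p.1))))

lemma cop_sub {h k : ℕ} (hle : h ≤ k) (hc : Nat.Coprime h k) : Nat.Coprime (k - h) k := by
  have h1 := Nat.coprime_sub_self_right (m := k - h) (n := k) (Nat.sub_le k h)
  rw [Nat.sub_sub_self hle] at h1
  exact h1.mp ((Nat.coprime_sub_self_left hle).mpr hc.symm)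

lemma f_sub (m : ℕ) {h k : ℕ} (hle : h ≤ k) : f m (k - h, k) = f m (h, k) := by
  unfold f
  refine Finset.sum_congr rfl fun s _ => ?_
  have h2 : k - (k - h) = h := by omega
  simp only [h2]
  ring

lemma sym_regions (m : ℕ) :
    ∑ p ∈ (Finset.Icc 1 m ×ˢ Finset.Icc 1 m).filter
        (fun p => p.2 < 2 * p.1 ∧ p.1 < p.2 ∧ Nat.Coprime p.1 p.2), f m p
    = ∑ p ∈ (Finset.Icc 1 m ×ˢ Finset.Icc 1 m).filter
        (fun p => 2 * p.1 < p.2 ∧ Nat.Coprime p.1 p.2), f m p := by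
  refine Finset.sum_nbij' (i := fun p => (p.2 - p.1, p.2)) (j := fun p => (p.2 - p.1, p.2))
    ?_ ?_ ?_ ?_ ?_
  · rintro ⟨h, k⟩ hp
    simp only [mem_filter, mem_product, mem_Icc] at hp ⊢
    obtain ⟨⟨⟨h1, h2⟩, h3, h4⟩, h5, h6, h7⟩ := hp
    exact ⟨⟨⟨by omega, by omega⟩, by omega, by omega⟩, by omega, cop_sub (by omega) h7⟩
  · rintro ⟨h, k⟩ hp
    simp only [mem_filter, mem_product, mem_Icc] at hp ⊢
    obtain ⟨⟨⟨h1, h2⟩, h3, h4⟩, h5, h7⟩ := hp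
    exact ⟨⟨⟨by omega, by omega⟩, by omega, by omega⟩, by omega, by omega,
      cop_sub (by omega) h7⟩
  · rintro ⟨h, k⟩ hp
    simp only [mem_filter, mem_product, mem_Icc] at hp
    simp only [Prod.mk.injEq, and_true]
    omega
  · rintro ⟨h, k⟩ hp
    simp only [mem_filter, mem_product, mem_Icc] at hp
    simp only [Prod.mk.injEq, and_true]
    omega
  · rintro ⟨h, k⟩ hp
    simp only [mem_filter, mem_product, mem_Icc] at hp
    exact (f_sub m (by omega)).symm

lemma split_T (m : ℕ) (hm : 1 < m) :
    ∑ p ∈ (Finset.Icc 1 m ×ˢ Finset.Icc 1 m).filter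
        (fun p => p.1 < p.2 ∧ Nat.Coprime p.1 p.2), f m p
    = (∑ p ∈ (Finset.Icc 1 m ×ˢ Finset.Icc 1 m).filter
        (fun p => 2 * p.1 < p.2 ∧ Nat.Coprime p.1 p.2), f m p)
      + (∑ p ∈ (Finset.Icc 1 m ×ˢ Finset.Icc 1 m).filter
        (fun p => p.2 < 2 * p.1 ∧ p.1 < p.2 ∧ Nat.Coprime p.1 p.2), f m p)
      + f m (1, 2) := by
  set s := Finset.Icc 1 m ×ˢ Finset.Icc 1 m with hs
  have e1 := Finset.sum_filter_add_sum_filter_not (s.filter (fun p => p.1 < p.2 ∧ Nat.Coprime p.1 p.2)) (fun p => 2 * p.1 < p.2) (f m)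
  rw [Finset.filter_filter, Finset.filter_filter] at e1
  have e2 := Finset.sum_filter_add_sum_filter_not
    (s.filter (fun p => (p.1 < p.2 ∧ Nat.Coprime p.1 p.2) ∧ ¬ 2 * p.1 < p.2)) (fun p => 2 * p.1 = p.2) (f m)
  rw [Finset.filter_filter, Finset.filter_filter] at e2
  have setEq1 : s.filter (fun p => (p.1 < p.2 ∧ Nat.Coprime p.1 p.2) ∧ 2 * p.1 < p.2)
      = s.filter (fun p => 2 * p.1 < p.2 ∧ Nat.Coprime p.1 p.2) := by
    apply Finset.filter_congr
    rintro ⟨a, b⟩ hab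
    simp only [hs, mem_product, mem_Icc] at hab
    dsimp only
    constructor
    · rintro ⟨⟨_, h2⟩, h3⟩; exact ⟨h3, h2⟩
    · rintro ⟨h1, h2⟩; exact ⟨⟨by omega, h2⟩, h1⟩
  have setEq2 : s.filter (fun p => ((p.1 < p.2 ∧ Nat.Coprime p.1 p.2) ∧ ¬ 2 * p.1 < p.2) ∧ 2 * p.1 = p.2) = {(1, 2)} := by
    ext ⟨a, b⟩
    simp only [hs, mem_filter, mem_product, mem_Icc, mem_singleton, Prod.mk.injEq]
    constructor
    · rintro ⟨⟨⟨ha1, ha2⟩, hb1, hb2⟩, ⟨⟨hab, hcop⟩, hnlt⟩, heq⟩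
      have hd : a ∣ Nat.gcd a b := Nat.dvd_gcd dvd_rfl ⟨2, by omega⟩
      rw [hcop.gcd_eq_one] at hd
      have := Nat.dvd_one.mp hd
      omega
    · rintro ⟨rfl, rfl⟩
      refine ⟨⟨⟨le_refl 1, by omega⟩, by omega, by omega⟩, ⟨⟨by omega, ?_⟩, by omega⟩, rfl⟩
      exact Nat.coprime_one_left 2
  have setEq3 : s.filter (fun p => ((p.1 < p.2 ∧ Nat.Coprime p.1 p.2) ∧ ¬ 2 * p.1 < p.2) ∧ ¬ 2 * p.1 = p.2)
      = s.filter (fun p => p.2 < 2 * p.1 ∧ p.1 < p.2 ∧ Nat.Coprime p.1 p.2) := by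
    apply Finset.filter_congr
    rintro ⟨a, b⟩ hab
    dsimp only
    constructor
    · rintro ⟨⟨⟨h1, h2⟩, h3⟩, h4⟩; exact ⟨by omega, h1, h2⟩
    · rintro ⟨h1, h2, h3⟩; exact ⟨⟨⟨h2, h3⟩, by omega⟩, by omega⟩
  rw [setEq2, Finset.sum_singleton, setEq3] at e2
  rw [setEq1, ← e2] at e1
  omega

lemma reindexT (m : ℕ) :
    ∑ p ∈ (Finset.Icc 1 m ×ˢ Finset.Icc 1 m).filter
        (fun p => p.1 < p.2 ∧ Nat.Coprime p.1 p.2), f m p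
    = ∑ q ∈ (Finset.Icc 1 m ×ˢ Finset.Icc 1 m).filter (fun q => q.1 < q.2),
        m.choose q.2 * (m.choose q.1 + m.choose (q.2 - q.1)) := by
  unfold f
  rw [Finset.sum_sigma' ((Finset.Icc 1 m ×ˢ Finset.Icc 1 m).filter
        (fun p => p.1 < p.2 ∧ Nat.Coprime p.1 p.2)) (fun p => Finset.Icc 1 (m / p.2))
      (fun p s => (m.choose (s * p.2)) *
          ((m.choose (s * p.1)) + (m.choose (s * (p.2 - p.1)))))]
  refine Finset.sum_nbij' (i := fun x => (x.2 * x.1.1, x.2 * x.1.2))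
    (j := fun q => ⟨(q.1 / Nat.gcd q.1 q.2, q.2 / Nat.gcd q.1 q.2), Nat.gcd q.1 q.2⟩)
    ?_ ?_ ?_ ?_ ?_
  · rintro ⟨⟨h, k⟩, s⟩ hx
    simp only [Finset.mem_sigma, mem_filter, mem_product, mem_Icc] at hx ⊢
    obtain ⟨⟨⟨⟨hh1, hh2⟩, hk1, hk2⟩, hlt, hcop⟩, hs1, hs2⟩ := hx
    have hsk : s * k ≤ m := (Nat.le_div_iff_mul_le (by omega)).mp hs2
    have hlt2 : s * h < s * k := mul_lt_mul_of_pos_left hlt (by omega)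
    exact ⟨⟨⟨Nat.mul_pos (by omega) (by omega), by omega⟩,
      Nat.mul_pos (by omega) (by omega), hsk⟩, hlt2⟩
  · rintro ⟨a, b⟩ hq
    simp only [mem_filter, mem_product, mem_Icc] at hq
    obtain ⟨⟨⟨ha1, ha2⟩, hb1, hb2⟩, hab⟩ := hq
    have hd : 0 < Nat.gcd a b := Nat.gcd_pos_of_pos_left b (by omega)
    have hdvd : Nat.gcd a b ∣ b := Nat.gcd_dvd_right a b
    have hbd : Nat.gcd a b * (b / Nat.gcd a b) = b := Nat.mul_div_cancel' hdvd
    have hkpos : 0 < b / Nat.gcd a b :=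
      Nat.div_pos (Nat.le_of_dvd (by omega) hdvd) hd
    simp only [Finset.mem_sigma, mem_filter, mem_product, mem_Icc]
    refine ⟨⟨⟨⟨?_, ?_⟩, ?_, ?_⟩, ?_, ?_⟩, hd, ?_⟩
    · exact Nat.div_pos (Nat.gcd_le_left b (by omega)) hd
    · exact (Nat.div_le_self a _).trans ha2
    · exact hkpos
    · exact (Nat.div_le_self b _).trans hb2
    · exact Nat.div_lt_div_of_lt_of_dvd hdvd hab
    · exact Nat.coprime_div_gcd_div_gcd hd
    · rw [Nat.le_div_iff_mul_le hkpos, hbd]; exact hb2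
  · rintro ⟨⟨h, k⟩, s⟩ hx
    simp only [Finset.mem_sigma, mem_filter, mem_product, mem_Icc] at hx
    obtain ⟨⟨⟨⟨hh1, hh2⟩, hk1, hk2⟩, hlt, hcop⟩, hs1, hs2⟩ := hx
    have hgcd : Nat.gcd (s * h) (s * k) = s := by
      rw [Nat.gcd_mul_left, hcop.gcd_eq_one, mul_one]
    simp only [hgcd, Nat.mul_div_cancel_left _ (show 0 < s by omega)]
  · rintro ⟨a, b⟩ hq
    simp only [mem_filter, mem_product, mem_Icc] at hq
    obtain ⟨⟨⟨ha1, ha2⟩, hb1, hb2⟩, hab⟩ := hq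
    simp only [Prod.mk.injEq]
    exact ⟨Nat.mul_div_cancel' (Nat.gcd_dvd_left a b),
      Nat.mul_div_cancel' (Nat.gcd_dvd_right a b)⟩
  · rintro ⟨⟨h, k⟩, s⟩ hx
    simp only [Finset.mem_sigma, mem_filter, mem_product, mem_Icc] at hx
    dsimp only
    rw [Nat.mul_sub]

lemma sub_sym (m : ℕ) :
    ∑ q ∈ (Finset.Icc 1 m ×ˢ Finset.Icc 1 m).filter (fun q => q.1 < q.2),
      m.choose q.2 * m.choose (q.2 - q.1)
    = ∑ q ∈ (Finset.Icc 1 m ×ˢ Finset.Icc 1 m).filter (fun q => q.1 < q.2),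
      m.choose q.2 * m.choose q.1 := by
  refine Finset.sum_nbij' (i := fun q => (q.2 - q.1, q.2)) (j := fun q => (q.2 - q.1, q.2))
    ?_ ?_ ?_ ?_ ?_
  · rintro ⟨a, b⟩ hq
    simp only [mem_filter, mem_product, mem_Icc] at hq ⊢
    omega
  · rintro ⟨a, b⟩ hq
    simp only [mem_filter, mem_product, mem_Icc] at hq ⊢
    omega
  · rintro ⟨a, b⟩ hq
    simp only [mem_filter, mem_product, mem_Icc] at hq
    simp only [Prod.mk.injEq, and_true]
    omega
  · rintro ⟨a, b⟩ hq
    simp only [mem_filter, mem_product, mem_Icc] at hq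
    simp only [Prod.mk.injEq, and_true]
    omega
  · rintro ⟨a, b⟩ _
    rfl

lemma diag_eq (m : ℕ) :
    ∑ q ∈ (Finset.range (m+1) ×ˢ Finset.range (m+1)).filter (fun q => q.1 = q.2),
      m.choose q.2 * m.choose q.1 = (2*m).choose m := by
  have h1 : ∑ q ∈ (Finset.range (m+1) ×ˢ Finset.range (m+1)).filter (fun q => q.1 = q.2),
      m.choose q.2 * m.choose q.1 = ∑ a ∈ Finset.range (m+1), m.choose a * m.choose a := by
    refine Finset.sum_nbij' (i := fun q => q.1) (j := fun a => (a, a)) ?_ ?_ ?_ ?_ ?_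
    · rintro ⟨a, b⟩ hq
      simp only [mem_filter, mem_product, mem_range] at hq ⊢
      omega
    · intro a ha
      simp only [mem_range] at ha
      simp only [mem_filter, mem_product, mem_range, and_true]
      omega
    · rintro ⟨a, b⟩ hq
      simp only [mem_filter, mem_product, mem_range] at hq
      simp only [Prod.mk.injEq, true_and]
      omega
    · intro a ha; rfl
    · rintro ⟨a, b⟩ hq
      simp only [mem_filter, mem_product, mem_range] at hq
      dsimp only
      rw [hq.2]
  rw [h1, two_mul, Nat.add_choose_eq, Finset.Nat.sum_antidiagonal_eq_sum_range_succ_mk]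
  refine Finset.sum_congr rfl fun k hk => ?_
  rw [Nat.choose_symm (by simpa [Nat.lt_succ_iff] using hk)]

lemma trichotomy (m : ℕ) :
    2 ^ (2 * m)
    = 2 * (∑ q ∈ (Finset.range (m+1) ×ˢ Finset.range (m+1)).filter (fun q => q.1 < q.2),
        m.choose q.2 * m.choose q.1) + (2*m).choose m := by
  have diag_eq := FareyAux.diag_eq m
  have square_eq : ∑ q ∈ Finset.range (m+1) ×ˢ Finset.range (m+1),
      m.choose q.2 * m.choose q.1 = 2 ^ (2 * m) := by
    have h : ∑ q ∈ Finset.range (m+1) ×ˢ Finset.range (m+1), m.choose q.2 * m.choose q.1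
        = (∑ i ∈ Finset.range (m+1), m.choose i) * (∑ j ∈ Finset.range (m+1), m.choose j) := by
      rw [Finset.sum_mul_sum, Finset.sum_product]
      exact Finset.sum_congr rfl fun x _ => Finset.sum_congr rfl fun y _ => mul_comm _ _
    rw [h, Nat.sum_range_choose, two_mul, pow_add]
  have e1 := Finset.sum_filter_add_sum_filter_not
    (Finset.range (m+1) ×ˢ Finset.range (m+1)) (fun q => q.1 < q.2)
    (fun q => m.choose q.2 * m.choose q.1)
  have e2 := Finset.sum_filter_add_sum_filter_not
    ((Finset.range (m+1) ×ˢ Finset.range (m+1)).filter (fun q => ¬ q.1 < q.2))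
    (fun q => q.1 = q.2) (fun q => m.choose q.2 * m.choose q.1)
  rw [Finset.filter_filter, Finset.filter_filter] at e2
  have setEq1 : (Finset.range (m+1) ×ˢ Finset.range (m+1)).filter
        (fun q => ¬ q.1 < q.2 ∧ q.1 = q.2)
      = (Finset.range (m+1) ×ˢ Finset.range (m+1)).filter (fun q => q.1 = q.2) := by
    apply Finset.filter_congr
    rintro ⟨a, b⟩ _
    dsimp only
    constructor
    · rintro ⟨_, h⟩; exact h
    · intro h; exact ⟨by omega, h⟩
  have hswap : ∑ q ∈ (Finset.range (m+1) ×ˢ Finset.range (m+1)).filter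
        (fun q => ¬ q.1 < q.2 ∧ ¬ q.1 = q.2), m.choose q.2 * m.choose q.1
      = ∑ q ∈ (Finset.range (m+1) ×ˢ Finset.range (m+1)).filter (fun q => q.1 < q.2),
        m.choose q.2 * m.choose q.1 := by
    refine Finset.sum_nbij' (i := fun q => (q.2, q.1)) (j := fun q => (q.2, q.1))
      ?_ ?_ ?_ ?_ ?_
    · rintro ⟨a, b⟩ hq
      simp only [mem_filter, mem_product, mem_range] at hq ⊢
      omega
    · rintro ⟨a, b⟩ hq
      simp only [mem_filter, mem_product, mem_range] at hq ⊢
      omega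
    · rintro ⟨a, b⟩ _; rfl
    · rintro ⟨a, b⟩ _; rfl
    · rintro ⟨a, b⟩ _
      exact mul_comm _ _
  rw [setEq1, hswap, diag_eq] at e2
  omega

lemma V_to_U (m : ℕ) (hm : 1 ≤ m) :
    (∑ q ∈ (Finset.range (m+1) ×ˢ Finset.range (m+1)).filter (fun q => q.1 < q.2),
        m.choose q.2 * m.choose q.1) + 1
    = (∑ q ∈ (Finset.Icc 1 m ×ˢ Finset.Icc 1 m).filter (fun q => q.1 < q.2),
        m.choose q.2 * m.choose q.1) + 2 ^ m := by
  have e1 := Finset.sum_filter_add_sum_filter_not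
    ((Finset.range (m+1) ×ˢ Finset.range (m+1)).filter (fun q => q.1 < q.2))
    (fun q => 1 ≤ q.1) (fun q => m.choose q.2 * m.choose q.1)
  rw [Finset.filter_filter, Finset.filter_filter] at e1
  have setEq1 : (Finset.range (m+1) ×ˢ Finset.range (m+1)).filter
        (fun q => q.1 < q.2 ∧ 1 ≤ q.1)
      = (Finset.Icc 1 m ×ˢ Finset.Icc 1 m).filter (fun q => q.1 < q.2) := by
    ext ⟨a, b⟩
    simp only [mem_filter, mem_product, mem_range, mem_Icc, Nat.lt_succ_iff]
    omega
  have e2 : ∑ q ∈ (Finset.range (m+1) ×ˢ Finset.range (m+1)).filter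
        (fun q => q.1 < q.2 ∧ ¬ 1 ≤ q.1), m.choose q.2 * m.choose q.1
      = ∑ b ∈ Finset.Icc 1 m, m.choose b := by
    refine Finset.sum_nbij' (i := fun q => q.2) (j := fun b => ((0 : ℕ), b)) ?_ ?_ ?_ ?_ ?_
    · rintro ⟨a, b⟩ hq
      simp only [mem_filter, mem_product, mem_range, Nat.lt_succ_iff] at hq
      simp only [mem_Icc]
      omega
    · intro b hb
      simp only [mem_Icc] at hb
      simp only [mem_filter, mem_product, mem_range, Nat.lt_succ_iff]
      refine ⟨⟨by omega, by omega⟩, by omega, by omega⟩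
    · rintro ⟨a, b⟩ hq
      simp only [mem_filter, mem_product, mem_range] at hq
      simp only [Prod.mk.injEq, true_and, and_true]
      omega
    · intro b hb; rfl
    · rintro ⟨a, b⟩ hq
      simp only [mem_filter, mem_product, mem_range] at hq
      have ha : a = 0 := by omega
      subst ha
      simp
  have e3 : ∑ b ∈ Finset.Icc 1 m, m.choose b + 1 = 2 ^ m := by
    have hins : Finset.range (m+1) = insert 0 (Finset.Icc 1 m) := by
      ext x; simp only [mem_range, mem_insert, mem_Icc, Nat.lt_succ_iff]; omega
    have h := Nat.sum_range_choose m
    rw [hins, Finset.sum_insert (by simp)] at h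
    simp only [Nat.choose_zero_right] at h
    omega
  rw [setEq1, e2] at e1
  omega

lemma f_mid (m : ℕ) :
    f m (1, 2) = 2 * ∑ t ∈ Finset.Icc 1 (m / 2), m.choose (2 * t) * m.choose t := by
  unfold f
  rw [Finset.mul_sum]
  refine Finset.sum_congr rfl fun s _ => ?_
  have h1 : s * 2 = 2 * s := mul_comm s 2
  have h2 : s * (2 - 1) = s := by norm_num
  rw [h1, h2]
  ring

lemma g_split (m : ℕ) :
    ∑ q ∈ (Finset.Icc 1 m ×ˢ Finset.Icc 1 m).filter (fun q => q.1 < q.2),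
      m.choose q.2 * (m.choose q.1 + m.choose (q.2 - q.1))
    = 2 * ∑ q ∈ (Finset.Icc 1 m ×ˢ Finset.Icc 1 m).filter (fun q => q.1 < q.2),
      m.choose q.2 * m.choose q.1 := by
  simp_rw [mul_add]
  rw [Finset.sum_add_distrib, sub_sym m, two_mul]

lemma key (m : ℕ) (hm : 1 < m) :
    2 * (∑ p ∈ (Finset.Icc 1 m ×ˢ Finset.Icc 1 m).filter
          (fun p => 2 * p.1 < p.2 ∧ Nat.Coprime p.1 p.2), f m p)
      + 2 * (∑ t ∈ Finset.Icc 1 (m / 2), m.choose (2 * t) * m.choose t)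
      + (2 * m).choose m + 2 ^ (m + 1) = 2 ^ (2 * m) + 2 := by
  have h1 := split_T m hm
  have h2 := sym_regions m
  have h3 := reindexT m
  have h4 := g_split m
  have h5 := trichotomy m
  have h6 := V_to_U m (by omega)
  have h7 := f_mid m
  have hp : 2 ^ (m + 1) = 2 ^ m * 2 := pow_succ 2 m
  omega

end FareyAux

/-- Identities for fractions of the standard Farey sequence `𝓕_m`.
The outer sums range over reduced fractions `h/k ∈ 𝓕_m` (coprime pairs with
`1 ≤ h < k ≤ m`) lying in `(0/1, 1/2)` and `(1/2, 1/1)`, respectively. -/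
theorem farey_half_binomial_identities (m : ℕ) (hm : 1 < m) :
    ((∑ p ∈ (Finset.Icc 1 m ×ˢ Finset.Icc 1 m).filter
        (fun p => 2 * p.1 < p.2 ∧ Nat.Coprime p.1 p.2),
      ∑ s ∈ Finset.Icc 1 (m / p.2),
        (m.choose (s * p.2)) *
          ((m.choose (s * p.1)) + (m.choose (s * (p.2 - p.1)))) : ℕ) : ℚ)
      = 2 ^ (2 * m - 1) - 2 ^ m - ((2 * m).choose m : ℚ) / 2
          - (∑ t ∈ Finset.Icc 1 (m / 2), (m.choose (2 * t)) * (m.choose t) : ℕ) + 1 ∧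
    ((∑ p ∈ (Finset.Icc 1 m ×ˢ Finset.Icc 1 m).filter
        (fun p => p.2 < 2 * p.1 ∧ p.1 < p.2 ∧ Nat.Coprime p.1 p.2),
      ∑ s ∈ Finset.Icc 1 (m / p.2),
        (m.choose (s * p.2)) *
          ((m.choose (s * p.1)) + (m.choose (s * (p.2 - p.1)))) : ℕ) : ℚ)
      = 2 ^ (2 * m - 1) - 2 ^ m - ((2 * m).choose m : ℚ) / 2
          - (∑ t ∈ Finset.Icc 1 (m / 2), (m.choose (2 * t)) * (m.choose t) : ℕ) + 1 := by
  have hr1 : (∑ p ∈ (Finset.Icc 1 m ×ˢ Finset.Icc 1 m).filter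
        (fun p => 2 * p.1 < p.2 ∧ Nat.Coprime p.1 p.2),
      ∑ s ∈ Finset.Icc 1 (m / p.2),
        (m.choose (s * p.2)) *
          ((m.choose (s * p.1)) + (m.choose (s * (p.2 - p.1)))))
      = ∑ p ∈ (Finset.Icc 1 m ×ˢ Finset.Icc 1 m).filter
        (fun p => 2 * p.1 < p.2 ∧ Nat.Coprime p.1 p.2), FareyAux.f m p := rfl
  have hr2 : (∑ p ∈ (Finset.Icc 1 m ×ˢ Finset.Icc 1 m).filter
        (fun p => p.2 < 2 * p.1 ∧ p.1 < p.2 ∧ Nat.Coprime p.1 p.2),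
      ∑ s ∈ Finset.Icc 1 (m / p.2),
        (m.choose (s * p.2)) *
          ((m.choose (s * p.1)) + (m.choose (s * (p.2 - p.1)))))
      = ∑ p ∈ (Finset.Icc 1 m ×ˢ Finset.Icc 1 m).filter
        (fun p => p.2 < 2 * p.1 ∧ p.1 < p.2 ∧ Nat.Coprime p.1 p.2), FareyAux.f m p := rfl
  rw [hr1, hr2, FareyAux.sym_regions m]
  have hkey := FareyAux.key m hm
  set n1 : ℕ := ∑ p ∈ (Finset.Icc 1 m ×ˢ Finset.Icc 1 m).filter
      (fun p => 2 * p.1 < p.2 ∧ Nat.Coprime p.1 p.2), FareyAux.f m p with hn1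
  set nS : ℕ := ∑ t ∈ Finset.Icc 1 (m / 2), (m.choose (2 * t)) * (m.choose t) with hnS
  set nC : ℕ := (2 * m).choose m with hnC
  have hq : ((2 * n1 + 2 * nS + nC + 2 ^ (m + 1) : ℕ) : ℚ)
      = ((2 ^ (2 * m) + 2 : ℕ) : ℚ) := by rw [hkey]
  push_cast at hq
  have h2 : (2 : ℚ) ^ (2 * m) = 2 * 2 ^ (2 * m - 1) := by
    rw [← pow_succ']
    congr 1
    omega
  have h3 : (2 : ℚ) ^ (m + 1) = 2 * 2 ^ m := by ring
  constructor <;> linarith
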